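/- Let R = ℤ/4ℤ and let A be the subgroup of G(R) consisting of those automorphisms σ for which σ(x) - x is nilpotent. Let H be a subgroup of G(R) that is not contained in A and such that H ∩ A is the trivial group. Then there exists a nilpotent element f of R[x] with f ∈ R[y] (where y = x·(-x + 1)) such that H is the cyclic group of order 2 generated by the automorphism β_f defined by β_f(x) = -x + 1 + f, and the ring of invariants R[x]^H equals R[y + x·f]. -/

import Mathlib

open Polynomial

/-! ### Auxiliary lemmas -/

/-- Reduction mod 2. -/
def phi4 : ZMod 4 →+* ZMod 2 := ZMod.castHom (show (2:ℕ) ∣ 4 by norm_num) (ZMod 2)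

lemma phi4_zero_sq : ∀ a : ZMod 4, phi4 a = 0 → a ^ 2 = 0 := by
  intro a; fin_cases a <;> decide

lemma phi4_two_mul : ∀ a : ZMod 4, 2 * a = 0 → phi4 a = 0 := by
  intro a; fin_cases a <;> decide

lemma phi4_half : ∀ a : ZMod 4, phi4 a = 0 → ∃ b, a = 2 * b := by
  intro a ha; fin_cases a
  · exact ⟨0, rfl⟩
  · exact absurd ha (by decide)
  · exact ⟨1, rfl⟩
  · exact absurd ha (by decide)

lemma phi4_surj : Function.Surjective phi4 := by
  intro b; fin_cases b
  · exact ⟨0, map_zero phi4⟩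
  · exact ⟨1, map_one phi4⟩

lemma zmod2_ne_zero : ∀ a : ZMod 2, a ≠ 0 → a = 1 := by decide

lemma four_eq_zero : (4 : (ZMod 4)[X]) = 0 := by
  rw [← map_ofNat (C : ZMod 4 →+* _) 4, show (4 : ZMod 4) = 0 by decide, map_zero]

lemma two_zero2 : (2 : (ZMod 2)[X]) = 0 := by
  rw [← map_ofNat (C : ZMod 2 →+* _) 2, show (2 : ZMod 2) = 0 by decide, map_zero]

lemma nilp_iff (p : (ZMod 4)[X]) : IsNilpotent p ↔ p.map phi4 = 0 := by
  constructor
  · intro hp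
    have : IsNilpotent (p.map phi4) := hp.map (Polynomial.mapRingHom phi4)
    exact this.eq_zero
  · intro hp
    rw [Polynomial.isNilpotent_iff]
    intro i
    have := Polynomial.ext_iff.mp hp i
    rw [coeff_map, coeff_zero] at this
    exact ⟨2, phi4_zero_sq _ this⟩

lemma exists_half (p : (ZMod 4)[X]) (hp : p.map phi4 = 0) : ∃ g, p = 2 * g := by
  have hc : ∀ n, ∃ b, p.coeff n = 2 * b := by
    intro n
    apply phi4_half
    have := Polynomial.ext_iff.mp hp n
    rwa [coeff_map, coeff_zero] at this
  choose b hb using hc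
  refine ⟨∑ n ∈ p.support, C (b n) * X ^ n, ?_⟩
  rw [Finset.mul_sum]
  conv_lhs => rw [p.as_sum_support]
  refine Finset.sum_congr rfl fun n _ => ?_
  rw [hb n, ← C_mul_X_pow_eq_monomial, map_mul, map_ofNat]
  ring

lemma two_mul_eq_zero (p : (ZMod 4)[X]) (hp : p.map phi4 = 0) : 2 * p = 0 := by
  obtain ⟨g, rfl⟩ := exists_half p hp
  rw [← mul_assoc, show (2:(ZMod 4)[X]) * 2 = 4 by norm_num, four_eq_zero, zero_mul]

lemma map_eq_zero_of_two_mul (p : (ZMod 4)[X]) (hp : 2 * p = 0) : p.map phi4 = 0 := by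
  ext n
  rw [coeff_map, coeff_zero]
  apply phi4_two_mul
  have := Polynomial.ext_iff.mp hp n
  simpa using this

lemma t_comp : ((X^2 + X : (ZMod 2)[X])).comp (X + 1) = X^2 + X := by
  simp only [add_comp, pow_comp, X_comp, one_comp]
  linear_combination (X + 1 : (ZMod 2)[X]) * two_zero2

lemma inv_linear (q : (ZMod 2)[X]) (hq : q.degree ≤ 1) (hqi : q.comp (X+1) = q) :
    ∃ c, q = C c := by
  obtain ⟨c1, c0, hq'⟩ : ∃ c1 c0, q = C c1 * X + C c0 :=
    ⟨_, _, eq_X_add_C_of_degree_le_one hq⟩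
  subst hq'
  have h0 := congrArg (fun r => coeff r 0) hqi
  simp [add_comp, mul_comp, C_comp, X_comp, mul_add, coeff_one] at h0
  exact ⟨c0, by rw [h0]; simp⟩

/-- Artin–Schreier type invariants: a polynomial over `𝔽₂` fixed by `X ↦ X + 1`
is a polynomial in `X² + X`. -/
lemma artin_schreier (p : (ZMod 2)[X]) (hp : p.comp (X + 1) = p) :
    p ∈ Algebra.adjoin (ZMod 2) ({X^2 + X} : Set ((ZMod 2)[X])) := by
  suffices h : ∀ (n : ℕ) (p : (ZMod 2)[X]), p.natDegree = n → p.comp (X + 1) = p →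
      p ∈ Algebra.adjoin (ZMod 2) ({X^2 + X} : Set ((ZMod 2)[X])) from h _ p rfl hp
  intro n
  induction n using Nat.strong_induction_on with
  | _ n ih =>
  intro p hn hp
  set t : (ZMod 2)[X] := X^2 + X with ht
  have htm : t.Monic := by
    rw [ht]
    show ((X:(ZMod 2)[X])^(1+1) + X).Monic
    exact Polynomial.monic_X_pow_add (by simpa using Polynomial.degree_X_le)
  have htdeg : t.natDegree = 2 := by rw [ht]; compute_degree!
  have htd2 : t.degree = 2 := by
    rw [Polynomial.degree_eq_natDegree htm.ne_zero, htdeg]; rfl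
  by_cases hd : p.degree ≤ 1
  · obtain ⟨c, rfl⟩ := inv_linear p hd hp
    exact Subalgebra.algebraMap_mem _ c
  · push_neg at hd
    have hp0 : p ≠ 0 := fun h => by simp [h] at hd
    have hpd2 : 2 ≤ p.natDegree := by
      by_contra hcon
      push_neg at hcon
      have hle := Polynomial.natDegree_le_iff_degree_le.mp (Nat.lt_succ_iff.mp hcon)
      rw [Nat.cast_one] at hle
      exact absurd hle (not_le.mpr hd)
    set u := p /ₘ t with hu
    set q := p %ₘ t with hq
    have hdiv : q + t * u = p := Polynomial.modByMonic_add_div p t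
    have hqd : q.degree < t.degree := Polynomial.degree_modByMonic_lt p htm
    have hqd2 : q.degree < 2 := by rw [← htd2]; exact hqd
    have hcomp : (q.comp (X+1)) + t * (u.comp (X+1)) = p := by
      conv_rhs => rw [← hp, ← hdiv]
      rw [add_comp, mul_comp, t_comp]
    have hqle : q.degree ≤ 1 := by
      rcases eq_or_ne q 0 with h0 | h0
      · simp [h0]
      · have h2 := (Polynomial.natDegree_lt_iff_degree_lt h0).mpr hqd2
        calc q.degree ≤ (q.natDegree : WithBot ℕ) := Polynomial.degree_le_natDegree
          _ ≤ 1 := by exact_mod_cast Nat.lt_succ_iff.mp h2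
    have hqcd : (q.comp (X+1)).degree < t.degree := by
      rcases eq_or_ne q 0 with h0 | h0
      · rw [h0]; simpa [htd2] using (WithBot.bot_lt_coe 2 : (⊥ : WithBot ℕ) < 2)
      · calc (q.comp (X+1)).degree ≤ ((q.comp (X+1)).natDegree : WithBot ℕ) :=
              Polynomial.degree_le_natDegree
          _ < t.degree := by
              rw [Polynomial.natDegree_comp, htd2]
              have h1 : (X + 1 : (ZMod 2)[X]).natDegree = 1 := by compute_degree!
              have h2 := (Polynomial.natDegree_lt_iff_degree_lt h0).mpr hqd2
              rw [h1, mul_one]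
              exact_mod_cast h2
    have huniq := Polynomial.div_modByMonic_unique (u.comp (X+1)) (q.comp (X+1)) htm
      ⟨hcomp, hqcd⟩
    have huinv : u.comp (X+1) = u := by rw [← hu] at huniq; exact huniq.1.symm
    have hqinv : q.comp (X+1) = q := by rw [← hq] at huniq; exact huniq.2.symm
    obtain ⟨c, hc⟩ := inv_linear q hqle hqinv
    have hud : u.natDegree < n := by
      rw [hu, Polynomial.natDegree_divByMonic p htm, htdeg, ← hn]
      omega
    have humem := ih _ hud u rfl huinv
    rw [← hdiv, hc]
    exact add_mem (Subalgebra.algebraMap_mem _ c)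
      (mul_mem (Algebra.subset_adjoin rfl) humem)

lemma two_mul_comp (a t : (ZMod 4)[X]) : (2*a).comp t = 2 * a.comp t := by
  simp [mul_comp]

lemma comp_dvd (p u v : (ZMod 4)[X]) : v ∣ p.comp (u + v) - p.comp u := by
  have h1 : p.comp (u + v) = (p.map (C : ZMod 4 →+* _)).eval (u + v) := by
    rw [eval_map]; rfl
  have h2 : p.comp u = (p.map (C : ZMod 4 →+* _)).eval u := by
    rw [eval_map]; rfl
  rw [h1, h2]
  have := Polynomial.sub_dvd_eval_sub (u + v) u (p.map (C : ZMod 4 →+* _))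
  simpa using this

lemma comp_perturb (p u s : (ZMod 4)[X]) (hp : p.map phi4 = 0) (hs : s.map phi4 = 0) :
    p.comp (u + s) = p.comp u := by
  obtain ⟨p', rfl⟩ := exists_half p hp
  obtain ⟨g, rfl⟩ := exists_half s hs
  obtain ⟨D, hD⟩ := comp_dvd p' u (2 * g)
  rw [two_mul_comp, two_mul_comp, eq_add_of_sub_eq hD]
  ring_nf
  rw [four_eq_zero]
  ring

lemma mem_adjoin_iff_comp (w p : (ZMod 4)[X]) :
    p ∈ Algebra.adjoin (ZMod 4) ({w} : Set ((ZMod 4)[X])) ↔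
      ∃ P : (ZMod 4)[X], P.comp w = p := by
  rw [Algebra.adjoin_singleton_eq_range_aeval, AlgHom.mem_range]
  constructor
  · rintro ⟨P, hP⟩; exact ⟨P, by rw [comp_eq_aeval]; exact hP⟩
  · rintro ⟨P, hP⟩; exact ⟨P, by rw [← comp_eq_aeval]; exact hP⟩

lemma lift_inv (w p : (ZMod 4)[X])
    (h : p.map phi4 ∈ Algebra.adjoin (ZMod 2) ({w.map phi4} : Set ((ZMod 2)[X]))) :
    ∃ q, q ∈ Algebra.adjoin (ZMod 4) ({w} : Set ((ZMod 4)[X])) ∧ (p - q).map phi4 = 0 := by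
  rw [Algebra.adjoin_singleton_eq_range_aeval, AlgHom.mem_range] at h
  obtain ⟨P, hP⟩ := h
  rw [← comp_eq_aeval] at hP
  obtain ⟨P', hP'⟩ := Polynomial.map_surjective phi4 phi4_surj P
  refine ⟨P'.comp w, (mem_adjoin_iff_comp w _).mpr ⟨P', rfl⟩, ?_⟩
  rw [Polynomial.map_sub, Polynomial.map_comp, hP', hP, sub_self]

lemma algEquiv_eq_comp (σ : (ZMod 4)[X] ≃ₐ[ZMod 4] (ZMod 4)[X]) (p : (ZMod 4)[X]) :
    σ p = p.comp (σ X) := by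
  rw [comp_eq_aeval, Polynomial.aeval_algHom_apply, aeval_X_left_apply]

lemma sigma_bar (σ : (ZMod 4)[X] ≃ₐ[ZMod 4] (ZMod 4)[X])
    (hσ : ¬ IsNilpotent (σ X - X)) : (σ X).map phi4 = X + 1 := by
  set b := σ X with hb
  set bb := b.map phi4 with hbb
  obtain ⟨p, hp⟩ : ∃ p, p.comp b = X :=
    ⟨σ.symm X, by rw [← algEquiv_eq_comp, σ.apply_symm_apply]⟩
  have hdeg : bb.natDegree = 1 := by
    have hmap := congrArg (Polynomial.map phi4) hp
    rw [Polynomial.map_comp] at hmap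
    have hX : (Polynomial.map phi4 (X : (ZMod 4)[X])) = X := by simp
    rw [hX] at hmap
    have := congrArg Polynomial.natDegree hmap
    rw [Polynomial.natDegree_comp, Polynomial.natDegree_X] at this
    have h1 : (Polynomial.map phi4 p).natDegree * bb.natDegree = 1 := this
    exact Nat.eq_one_of_mul_eq_one_left h1
  have hd1 : bb.degree ≤ 1 := by
    rw [Polynomial.degree_eq_natDegree (fun h => by simp [h] at hdeg), hdeg]
    simp
  have hbbform := Polynomial.eq_X_add_C_of_degree_le_one hd1
  have hc1 : bb.coeff 1 = 1 := by
    apply zmod2_ne_zero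
    have : bb.leadingCoeff ≠ 0 := Polynomial.leadingCoeff_ne_zero.mpr
      (fun h => by simp [h] at hdeg)
    rwa [Polynomial.leadingCoeff, hdeg] at this
  have hc0 : bb.coeff 0 = 1 := by
    apply zmod2_ne_zero
    intro h0
    apply hσ
    rw [nilp_iff, Polynomial.map_sub]
    rw [← hbb, hbbform, hc1, h0]
    simp
  rw [hbbform, hc1, hc0]
  simp

lemma map_negX : ((-X + 1 : (ZMod 4)[X]).map phi4) = X + 1 := by
  rw [Polynomial.map_add, Polynomial.map_neg, Polynomial.map_one, Polynomial.map_X]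
  linear_combination (-X : (ZMod 2)[X]) * two_zero2

lemma half_comp_inv (r : (ZMod 4)[X]) (hinv : (2*r).comp (-X+1) = 2*r) :
    (r.map phi4).comp (X+1) = r.map phi4 := by
  have h0 : 2 * (r.comp (-X+1) - r) = 0 := by
    rw [mul_sub, ← two_mul_comp]
    rw [hinv]
    ring
  have h1 := map_eq_zero_of_two_mul _ h0
  rw [Polynomial.map_sub, Polynomial.map_comp, sub_eq_zero, map_negX] at h1
  exact h1

/-- The subgroup `A` of `G(ℤ/4ℤ)` consisting of the automorphisms `σ` of `(ℤ/4ℤ)[x]`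
for which `σ(x) - x` is nilpotent. -/
noncomputable def nilShiftSubgroup : Subgroup ((ZMod 4)[X] ≃ₐ[ZMod 4] (ZMod 4)[X]) where
  carrier := {σ | IsNilpotent (σ X - X)}
  one_mem' := by
    simp only [Set.mem_setOf_eq, AlgEquiv.one_apply, sub_self]
    exact IsNilpotent.zero
  mul_mem' := by
    intro σ τ hσ hτ
    have h : (σ * τ) X - X = (σ X - X) + σ (τ X - X) := by
      show σ (τ X) - X = _
      rw [map_sub]
      ring
    have : IsNilpotent (σ (τ X - X)) := hτ.map σ.toAlgHom
    rw [Set.mem_setOf_eq, h]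
    exact (Commute.all _ _).isNilpotent_add hσ this
  inv_mem' := by
    intro σ hσ
    show IsNilpotent (σ.symm X - X)
    have h : σ.symm X - X = -(σ.symm (σ X - X)) := by
      rw [map_sub, σ.symm_apply_apply]
      ring
    rw [h]
    exact (hσ.map σ.symm.toAlgHom).neg

lemma mem_nilShift (σ : (ZMod 4)[X] ≃ₐ[ZMod 4] (ZMod 4)[X]) :
    σ ∈ nilShiftSubgroup ↔ IsNilpotent (σ X - X) := Iff.rfl

/-- Theorem: over `R = ℤ/4ℤ`, if a subgroup `H` of `G(R)` is not contained in `A` and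
`H ∩ A` is trivial, then `H = ⟨β_f⟩` is cyclic of order 2 with `β_f(x) = -x + 1 + f` for
some nilpotent `f ∈ R[y]`, and `R[x]^H = R[y + x·f]`, where `y = x·(-x+1)`. -/
theorem zmod4_invariants_of_complement_subgroup
    (H : Subgroup ((ZMod 4)[X] ≃ₐ[ZMod 4] (ZMod 4)[X]))
    (h1 : ¬ H ≤ nilShiftSubgroup) (h2 : H ⊓ nilShiftSubgroup = ⊥) :
    ∃ f : (ZMod 4)[X], IsNilpotent f ∧
      f ∈ Algebra.adjoin (ZMod 4) ({X * (-X + 1)} : Set ((ZMod 4)[X])) ∧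
      ∃ β : (ZMod 4)[X] ≃ₐ[ZMod 4] (ZMod 4)[X], β X = -X + 1 + f ∧
        H = Subgroup.zpowers β ∧ orderOf β = 2 ∧
        {g : (ZMod 4)[X] | ∀ σ ∈ H, σ g = g} =
          (Algebra.adjoin (ZMod 4)
            ({X * (-X + 1) + X * f} : Set ((ZMod 4)[X])) : Set ((ZMod 4)[X])) := by
  rw [SetLike.le_def] at h1
  push_neg at h1
  obtain ⟨β, hβH, hβA⟩ := h1
  have hβnil : ¬ IsNilpotent (β X - X) := fun h => hβA ((mem_nilShift β).mpr h)
  set b := β X with hbdef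
  have hbbar : b.map phi4 = X + 1 := sigma_bar β hβnil
  set f := b + X - 1 with hf
  have hbf : b = -X + 1 + f := by rw [hf]; ring
  have hfbar : f.map phi4 = 0 := by
    rw [hf, Polynomial.map_sub, Polynomial.map_add, hbbar, Polynomial.map_X,
      Polynomial.map_one]
    linear_combination (X : (ZMod 2)[X]) * two_zero2
  have hfnil : IsNilpotent f := (nilp_iff f).mpr hfbar
  -- β has order two
  have hsq : β * β = 1 := by
    have hmem : β * β ∈ H ⊓ nilShiftSubgroup := by
      refine ⟨mul_mem hβH hβH, (mem_nilShift _).mpr ?_⟩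
      have hx : (β * β) X = b.comp b := by
        show β (β X) = b.comp b
        rw [algEquiv_eq_comp]
      rw [nilp_iff, hx, Polynomial.map_sub, Polynomial.map_comp, hbbar, Polynomial.map_X,
        add_comp, X_comp, one_comp]
      linear_combination two_zero2
    rwa [h2, Subgroup.mem_bot] at hmem
  have hbb : b.comp b = X := by
    have h := congrArg (fun σ : (ZMod 4)[X] ≃ₐ[ZMod 4] (ZMod 4)[X] => σ X) hsq
    have h' : β (β X) = X := h
    rwa [algEquiv_eq_comp β (β X)] at h'
  -- f is invariant under x ↦ -x + 1
  have hfcomp : f.comp b = f := by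
    have h := hbb
    conv_lhs at h => rw [hbf]
    rw [add_comp, add_comp, neg_comp, X_comp, one_comp] at h
    conv_lhs => rw [hbf]
    linear_combination h
  have hfinv : f.comp (-X + 1) = f := by
    have h : f.comp ((-X + 1) + f) = f := by rw [← hbf]; exact hfcomp
    rwa [comp_perturb f (-X+1) f hfbar hfbar] at h
  -- reduction of the generators
  have hybar : ((X * (-X + 1) : (ZMod 4)[X]).map phi4) = X^2 + X := by
    rw [Polynomial.map_mul, map_negX, Polynomial.map_X]
    ring
  -- f ∈ R[y]
  obtain ⟨g, hg⟩ := exists_half f hfbar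
  have hginv : (g.map phi4).comp (X+1) = g.map phi4 :=
    half_comp_inv g (by rw [← hg]; exact hfinv)
  obtain ⟨q, hqmem, hq0⟩ := lift_inv (X * (-X + 1)) g
    (by rw [hybar]; exact artin_schreier _ hginv)
  have hfmem : f ∈ Algebra.adjoin (ZMod 4) ({X * (-X + 1)} : Set ((ZMod 4)[X])) := by
    have h2q : f = q + q := by
      have h0 := two_mul_eq_zero _ hq0
      rw [hg]
      linear_combination h0
    rw [h2q]
    exact add_mem hqmem hqmem
  -- dichotomy for elements of H
  have hdich : ∀ τ ∈ H, τ = 1 ∨ τ = β := by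
    intro τ hτ
    by_cases hτA : τ ∈ nilShiftSubgroup
    · left
      have hm : τ ∈ H ⊓ nilShiftSubgroup := ⟨hτ, hτA⟩
      rwa [h2, Subgroup.mem_bot] at hm
    · right
      have hτbar : (τ X).map phi4 = X + 1 :=
        sigma_bar τ (fun h => hτA ((mem_nilShift τ).mpr h))
      have hμ : β * τ ∈ nilShiftSubgroup := by
        refine (mem_nilShift _).mpr ?_
        have hx : (β * τ) X = (τ X).comp b := by
          show β (τ X) = _
          rw [algEquiv_eq_comp]
        rw [nilp_iff, hx, Polynomial.map_sub, Polynomial.map_comp, hτbar, hbbar,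
          Polynomial.map_X, add_comp, X_comp, one_comp]
        linear_combination two_zero2
      have hμ1 : β * τ = 1 := by
        have hm : β * τ ∈ H ⊓ nilShiftSubgroup := ⟨mul_mem hβH hτ, hμ⟩
        rwa [h2, Subgroup.mem_bot] at hm
      have hβinv : β⁻¹ = β := by
        rw [inv_eq_iff_mul_eq_one]; exact hsq
      calc τ = β⁻¹ * (β * τ) := by group
        _ = β := by rw [hμ1, hβinv, mul_one]
  have hβne1 : β ≠ 1 := by
    intro h
    apply hβnil
    rw [hbdef, h]
    simp only [AlgEquiv.one_apply, sub_self]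
    exact IsNilpotent.zero
  -- invariance of w
  set w : (ZMod 4)[X] := X * (-X + 1) + X * f with hw
  have hwb : w = X * b := by rw [hw, hbf]; ring
  have hwinv : w.comp b = w := by
    conv_lhs => rw [hwb]
    rw [mul_comp, X_comp, hbb, hwb]
    ring
  have hwbar : w.map phi4 = X^2 + X := by
    rw [hw, Polynomial.map_add, hybar, Polynomial.map_mul, hfbar, mul_zero, add_zero]
  have hadj_inv : ∀ p ∈ Algebra.adjoin (ZMod 4) ({w} : Set ((ZMod 4)[X])), p.comp b = p := by
    intro p hp
    obtain ⟨P, hP⟩ := (mem_adjoin_iff_comp w p).mp hp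
    rw [← hP, comp_assoc, hwinv]
  refine ⟨f, hfnil, hfmem, β, hbf, ?_, ?_, ?_⟩
  · -- H = zpowers β
    refine le_antisymm (fun τ hτ => ?_) (Subgroup.zpowers_le.mpr hβH)
    rcases hdich τ hτ with h | h
    · rw [h]; exact one_mem _
    · rw [h]; exact Subgroup.mem_zpowers β
  · -- order 2
    exact orderOf_eq_prime (by rw [pow_two]; exact hsq) hβne1
  · -- invariants
    ext p
    simp only [Set.mem_setOf_eq, SetLike.mem_coe]
    constructor
    · intro hpinv
      have hpb : p.comp b = p := by
        rw [← algEquiv_eq_comp]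
        exact hpinv β hβH
      have hpbar : (p.map phi4).comp (X+1) = p.map phi4 := by
        have h := congrArg (Polynomial.map phi4) hpb
        rwa [Polynomial.map_comp, hbbar] at h
      obtain ⟨q1, hq1mem, hq10⟩ := lift_inv w p (by rw [hwbar]; exact artin_schreier _ hpbar)
      have hrb : (p - q1).comp b = p - q1 := by
        rw [sub_comp, hpb, hadj_inv q1 hq1mem]
      have hrinv : (p - q1).comp (-X + 1) = p - q1 := by
        have h : (p - q1).comp ((-X + 1) + f) = p - q1 := by rw [← hbf]; exact hrb
        rwa [comp_perturb _ _ _ hq10 hfbar] at h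
      obtain ⟨r, hr⟩ := exists_half (p - q1) hq10
      have hrbar : (r.map phi4).comp (X+1) = r.map phi4 :=
        half_comp_inv r (by rw [← hr]; exact hrinv)
      obtain ⟨s, hsmem, hs0⟩ := lift_inv w r (by rw [hwbar]; exact artin_schreier _ hrbar)
      have hps : p = q1 + (s + s) := by
        have h0 := two_mul_eq_zero _ hs0
        linear_combination hr + h0
      rw [hps]
      exact add_mem hq1mem (add_mem hsmem hsmem)
    · intro hpmem σ hσ
      rcases hdich σ hσ with h | h
      · rw [h]; rfl
      · rw [h, algEquiv_eq_comp]
        exact hadj_inv p hpmem
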